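/- Let R = R₁ × R₂, S = S₁ × S₂ with Sᵢ multiplicatively closed in Rᵢ, M = M₁ × M₂ with Mᵢ an Rᵢ-module, and N = N₁ × N₂ a submodule. Then N is an S-2-absorbing second submodule of M if and only if either (i) Ann_{R₁}(N₁) ∩ S₁ ≠ ∅ and N₂ is an S₂-2-absorbing second submodule of M₂, or (ii) Ann_{R₂}(N₂) ∩ S₂ ≠ ∅ and N₁ is an S₁-2-absorbing second submodule of M₁, or (iii) N₁ is an S₁-second submodule of M₁ and N₂ is an S₂-second submodule of M₂. -/

import Mathlib

open Pointwise

/-- `S` is a multiplicatively closed subset of `R`: `0 ∉ S`, `1 ∈ S`, closed under products. -/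
def IsMCS {R : Type*} [CommRing R] (S : Set R) : Prop :=
  (0 : R) ∉ S ∧ (1 : R) ∈ S ∧ ∀ s ∈ S, ∀ t ∈ S, s * t ∈ S

/-- `N` is an `S`-2-absorbing submodule of `M`. -/
def IsS2AbsorbingSubmodule {R M : Type*} [CommRing R] [AddCommGroup M] [Module R M]
    (S : Set R) (N : Submodule R M) : Prop :=
  (∀ s ∈ S, s ∉ N.colon ⊤) ∧
  ∃ s ∈ S, ∀ a b : R, ∀ m : M, (a * b) • m ∈ N →
    s * (a * b) ∈ N.colon ⊤ ∨ (s * a) • m ∈ N ∨ (s * b) • m ∈ N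

/-- `I` is an `S`-2-absorbing ideal of `R`. -/
def IsS2AbsorbingIdeal {R : Type*} [CommRing R] (S : Set R) (I : Ideal R) : Prop :=
  (∀ s ∈ S, s ∉ I) ∧
  ∃ s ∈ S, ∀ a b c : R, a * b * c ∈ I →
    s * (a * b) ∈ I ∨ s * (a * c) ∈ I ∨ s * (b * c) ∈ I

/-- `N` is an `S`-2-absorbing second submodule of `M`. -/
def IsS2AbsorbingSecond {R M : Type*} [CommRing R] [AddCommGroup M] [Module R M]
    (S : Set R) (N : Submodule R M) : Prop :=
  (∀ s ∈ S, s ∉ N.annihilator) ∧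
  ∃ s ∈ S, ∀ a b : R, ∀ K : Submodule R M, (a * b) • N ≤ K →
    (s * a) • N ≤ K ∨ (s * b) • N ≤ K ∨ (s * (a * b)) • N = ⊥

/-- `N` is an `S`-second submodule of `M`. -/
def IsSSecond {R M : Type*} [CommRing R] [AddCommGroup M] [Module R M]
    (S : Set R) (N : Submodule R M) : Prop :=
  (∀ s ∈ S, s ∉ N.annihilator) ∧
  ∃ s ∈ S, ∀ r : R, ∀ K : Submodule R M, r • N ≤ K →
    (r * s) • N = ⊥ ∨ s • N ≤ K

/-- `N` is a strongly 2-absorbing second submodule of `M`. -/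
def IsStrongly2AbsorbingSecond {R M : Type*} [CommRing R] [AddCommGroup M] [Module R M]
    (N : Submodule R M) : Prop :=
  N ≠ ⊥ ∧ ∀ a b : R, ∀ K : Submodule R M, (a * b) • N ≤ K →
    a • N ≤ K ∨ b • N ≤ K ∨ (a * b) • N = ⊥


/-- The componentwise action of `R₁ × R₂` on `M₁` (through the first projection). -/
instance prodModuleLeft {R1 R2 M1 : Type*} [CommRing R1] [CommRing R2]
    [AddCommGroup M1] [Module R1 M1] : Module (R1 × R2) M1 :=
  Module.compHom M1 (RingHom.fst R1 R2)

/-- The componentwise action of `R₁ × R₂` on `M₂` (through the second projection). -/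
instance prodModuleRight {R1 R2 M2 : Type*} [CommRing R1] [CommRing R2]
    [AddCommGroup M2] [Module R2 M2] : Module (R1 × R2) M2 :=
  Module.compHom M2 (RingHom.snd R1 R2)

instance prodSMulCommLeft {R1 R2 M1 : Type*} [CommRing R1] [CommRing R2]
    [AddCommGroup M1] [Module R1 M1] :
    SMulCommClass (R1 × R2) (R1 × R2) M1 :=
  ⟨fun r s m => smul_comm r.1 s.1 m⟩

instance prodSMulCommRight {R1 R2 M2 : Type*} [CommRing R1] [CommRing R2]
    [AddCommGroup M2] [Module R2 M2] :
    SMulCommClass (R1 × R2) (R1 × R2) M2 :=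
  ⟨fun r s m => smul_comm r.2 s.2 m⟩

/-- The product `N₁ × N₂` of submodules, as a submodule of the `R₁ × R₂`-module `M₁ × M₂`. -/
def Submodule.prodProd {R1 R2 M1 M2 : Type*} [CommRing R1] [CommRing R2]
    [AddCommGroup M1] [Module R1 M1] [AddCommGroup M2] [Module R2 M2]
    (N1 : Submodule R1 M1) (N2 : Submodule R2 M2) :
    Submodule (R1 × R2) (M1 × M2) where
  carrier := {x | x.1 ∈ N1 ∧ x.2 ∈ N2}
  add_mem' hx hy := ⟨N1.add_mem hx.1 hy.1, N2.add_mem hx.2 hy.2⟩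
  zero_mem' := ⟨N1.zero_mem, N2.zero_mem⟩
  smul_mem' r x hx := ⟨N1.smul_mem r.1 hx.1, N2.smul_mem r.2 hx.2⟩


section MyHelpers

variable {R M : Type*} [CommRing R] [AddCommGroup M] [Module R M] [SMulCommClass R R M]

lemma my_mem_smul (r : R) (N : Submodule R M) (m : M) :
    m ∈ r • N ↔ ∃ n ∈ N, r • n = m := by
  rw [← SetLike.mem_coe, Submodule.coe_pointwise_smul]; exact Set.mem_smul_set

lemma my_smul_le (r : R) (N K : Submodule R M) :
    r • N ≤ K ↔ ∀ n ∈ N, r • n ∈ K := by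
  constructor
  · intro h n hn
    exact h ((my_mem_smul r N _).mpr ⟨n, hn, rfl⟩)
  · intro h x hx
    obtain ⟨n, hn, rfl⟩ := (my_mem_smul r N x).mp hx
    exact h n hn

lemma my_smul_eq_bot (r : R) (N : Submodule R M) :
    r • N = ⊥ ↔ ∀ n ∈ N, r • n = 0 := by
  rw [eq_bot_iff, my_smul_le]
  simp

/-- Key component lemma used in the (iii) ⇒ product direction. -/
lemma my_key (N K : Submodule R M) (s a b : R)
    (hs : ∀ r : R, ∀ K : Submodule R M, r • N ≤ K → (r * s) • N = ⊥ ∨ s • N ≤ K)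
    (hab : (a * b) • N ≤ K) :
    ((s * a) • N ≤ K ∧ (s * (a * b)) • N = ⊥) ∨ (s * b) • N ≤ K := by
  have hside : a • N ≤ Submodule.comap (LinearMap.lsmul R M b) K := by
    rw [my_smul_le]
    intro n hn
    simp only [Submodule.mem_comap, LinearMap.lsmul_apply]
    have := (my_smul_le _ _ _).mp hab n hn
    rwa [mul_comm, mul_smul] at this
  rcases hs a (Submodule.comap (LinearMap.lsmul R M b) K) hside with h | h
  · left
    have h0 := (my_smul_eq_bot _ _).mp h
    constructor
    · rw [my_smul_le]
      intro n hn
      rw [mul_comm, h0 n hn]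
      exact K.zero_mem
    · rw [my_smul_eq_bot]
      intro n hn
      have : s * (a * b) = b * (a * s) := by ring
      rw [this, mul_smul, h0 n hn, smul_zero]
  · right
    rw [my_smul_le] at h ⊢
    intro n hn
    have := h n hn
    simp only [Submodule.mem_comap, LinearMap.lsmul_apply] at this
    rwa [mul_comm, mul_smul]

end MyHelpers

section MyProdHelpers

variable {R1 R2 M1 M2 : Type*} [CommRing R1] [CommRing R2]
    [AddCommGroup M1] [Module R1 M1] [AddCommGroup M2] [Module R2 M2]

lemma my_prod_smul (r : R1 × R2) (p : M1 × M2) : r • p = (r.1 • p.1, r.2 • p.2) := rfl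

lemma my_mem_prodProd (N1 : Submodule R1 M1) (N2 : Submodule R2 M2) (x : M1 × M2) :
    x ∈ N1.prodProd N2 ↔ x.1 ∈ N1 ∧ x.2 ∈ N2 := Iff.rfl

/-- First component of a submodule of the product. -/
def fstSub (K : Submodule (R1 × R2) (M1 × M2)) : Submodule R1 M1 where
  carrier := {x | ((x, 0) : M1 × M2) ∈ K}
  add_mem' {a b} ha hb := by
    have := K.add_mem ha hb
    simpa using this
  zero_mem' := K.zero_mem
  smul_mem' r x hx := by
    have := K.smul_mem (r, 0) hx
    rw [my_prod_smul] at this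
    simpa using this

/-- Second component of a submodule of the product. -/
def sndSub (K : Submodule (R1 × R2) (M1 × M2)) : Submodule R2 M2 where
  carrier := {y | ((0, y) : M1 × M2) ∈ K}
  add_mem' {a b} ha hb := by
    have := K.add_mem ha hb
    simpa using this
  zero_mem' := K.zero_mem
  smul_mem' r y hy := by
    have := K.smul_mem ((0, r) : R1 × R2) hy
    rw [my_prod_smul] at this
    simpa using this

lemma my_mem_K (K : Submodule (R1 × R2) (M1 × M2)) (x : M1 × M2) :
    x ∈ K ↔ x.1 ∈ fstSub K ∧ x.2 ∈ sndSub K := by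
  constructor
  · intro hx
    constructor
    · have := K.smul_mem ((1, 0) : R1 × R2) hx
      simpa [fstSub, my_prod_smul] using this
    · have := K.smul_mem ((0, 1) : R1 × R2) hx
      simpa [sndSub, my_prod_smul] using this
  · rintro ⟨h1, h2⟩
    have hx : x = (x.1, 0) + (0, x.2) := by ext <;> simp
    rw [hx]
    exact K.add_mem h1 h2

lemma fstSub_prodProd (N1 : Submodule R1 M1) (N2 : Submodule R2 M2) :
    fstSub (N1.prodProd N2) = N1 := by
  ext x
  simp [fstSub, my_mem_prodProd]

lemma sndSub_prodProd (N1 : Submodule R1 M1) (N2 : Submodule R2 M2) :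
    sndSub (N1.prodProd N2) = N2 := by
  ext x
  simp [sndSub, my_mem_prodProd]

lemma my_mem_ann_prod (N1 : Submodule R1 M1) (N2 : Submodule R2 M2) (r : R1 × R2) :
    r ∈ (N1.prodProd N2).annihilator ↔ r.1 ∈ N1.annihilator ∧ r.2 ∈ N2.annihilator := by
  simp only [Submodule.mem_annihilator]
  constructor
  · intro h
    constructor
    · intro n hn
      have := h (n, 0) ⟨hn, N2.zero_mem⟩
      rw [my_prod_smul, Prod.ext_iff] at this
      exact this.1
    · intro n hn
      have := h (0, n) ⟨N1.zero_mem, hn⟩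
      rw [my_prod_smul, Prod.ext_iff] at this
      exact this.2
  · rintro ⟨h1, h2⟩ n hn
    rw [my_prod_smul, Prod.ext_iff]
    exact ⟨h1 n.1 hn.1, h2 n.2 hn.2⟩

lemma my_prod_smul_le (r : R1 × R2) (N1 : Submodule R1 M1) (N2 : Submodule R2 M2)
    (K : Submodule (R1 × R2) (M1 × M2)) :
    r • (N1.prodProd N2) ≤ K ↔ r.1 • N1 ≤ fstSub K ∧ r.2 • N2 ≤ sndSub K := by
  rw [my_smul_le, my_smul_le, my_smul_le]
  constructor
  · intro h
    constructor
    · intro n hn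
      have := h (n, 0) ⟨hn, N2.zero_mem⟩
      rw [my_mem_K, my_prod_smul] at this
      exact this.1
    · intro n hn
      have := h (0, n) ⟨N1.zero_mem, hn⟩
      rw [my_mem_K, my_prod_smul] at this
      exact this.2
  · rintro ⟨h1, h2⟩ n hn
    rw [my_mem_K, my_prod_smul]
    exact ⟨h1 n.1 hn.1, h2 n.2 hn.2⟩

lemma my_prod_smul_eq_bot (r : R1 × R2) (N1 : Submodule R1 M1) (N2 : Submodule R2 M2) :
    r • (N1.prodProd N2) = ⊥ ↔ r.1 • N1 = ⊥ ∧ r.2 • N2 = ⊥ := by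
  rw [my_smul_eq_bot, my_smul_eq_bot, my_smul_eq_bot]
  constructor
  · intro h
    constructor
    · intro n hn
      have := h (n, 0) ⟨hn, N2.zero_mem⟩
      rw [my_prod_smul, Prod.ext_iff] at this
      exact this.1
    · intro n hn
      have := h (0, n) ⟨N1.zero_mem, hn⟩
      rw [my_prod_smul, Prod.ext_iff] at this
      exact this.2
  · rintro ⟨h1, h2⟩ n hn
    rw [my_prod_smul, Prod.ext_iff]
    exact ⟨h1 n.1 hn.1, h2 n.2 hn.2⟩

end MyProdHelpers

lemma my_combine {A1 B1 C1 A2 B2 C2 G : Prop}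
    (h1a : (A1 ∧ C1) ∨ B1) (h1b : (B1 ∧ C1) ∨ A1)
    (h2a : (A2 ∧ C2) ∨ B2) (h2b : (B2 ∧ C2) ∨ A2)
    (gA : A1 → A2 → G) (gB : B1 → B2 → G) (gC : C1 → C2 → G) : G := by
  tauto

theorem stmt18 {R1 R2 M1 M2 : Type*} [CommRing R1] [CommRing R2]
    [AddCommGroup M1] [Module R1 M1] [AddCommGroup M2] [Module R2 M2]
    (S1 : Set R1) (S2 : Set R2) (hS1 : IsMCS S1) (hS2 : IsMCS S2)
    (N1 : Submodule R1 M1) (N2 : Submodule R2 M2) :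
    IsS2AbsorbingSecond (S1 ×ˢ S2) (N1.prodProd N2) ↔
      ((∃ s ∈ S1, s ∈ N1.annihilator) ∧ IsS2AbsorbingSecond S2 N2) ∨
      ((∃ s ∈ S2, s ∈ N2.annihilator) ∧ IsS2AbsorbingSecond S1 N1) ∨
      (IsSSecond S1 N1 ∧ IsSSecond S2 N2) := by
  constructor
  · rintro ⟨hann, s, hsS, hs⟩
    by_cases h1 : ∃ t ∈ S1, t ∈ N1.annihilator
    · left
      obtain ⟨t, htS, htA⟩ := h1
      refine ⟨⟨t, htS, htA⟩, fun u hu hu' => hann (t, u) ⟨htS, hu⟩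
        ((my_mem_ann_prod N1 N2 (t, u)).mpr ⟨htA, hu'⟩), s.2, hsS.2, ?_⟩
      intro a b K hab
      have hside : (((1 : R1), a) * ((1 : R1), b)) • (N1.prodProd N2) ≤ Submodule.prodProd ⊤ K := by
        rw [my_prod_smul_le, fstSub_prodProd, sndSub_prodProd]
        exact ⟨le_top, hab⟩
      rcases hs (1, a) (1, b) (Submodule.prodProd ⊤ K) hside with h | h | h
      · left
        have := ((my_prod_smul_le _ _ _ _).mp h).2
        rw [sndSub_prodProd] at this
        exact this
      · right; left
        have := ((my_prod_smul_le _ _ _ _).mp h).2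
        rw [sndSub_prodProd] at this
        exact this
      · right; right
        exact ((my_prod_smul_eq_bot _ _ _).mp h).2
    · by_cases h2 : ∃ t ∈ S2, t ∈ N2.annihilator
      · right; left
        obtain ⟨t, htS, htA⟩ := h2
        refine ⟨⟨t, htS, htA⟩, fun u hu hu' => hann (u, t) ⟨hu, htS⟩
          ((my_mem_ann_prod N1 N2 (u, t)).mpr ⟨hu', htA⟩), s.1, hsS.1, ?_⟩
        intro a b K hab
        have hside : ((a, (1 : R2)) * (b, (1 : R2))) • (N1.prodProd N2) ≤ Submodule.prodProd K ⊤ := by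
          rw [my_prod_smul_le, fstSub_prodProd, sndSub_prodProd]
          exact ⟨hab, le_top⟩
        rcases hs (a, 1) (b, 1) (Submodule.prodProd K ⊤) hside with h | h | h
        · left
          have := ((my_prod_smul_le _ _ _ _).mp h).1
          rw [fstSub_prodProd] at this
          exact this
        · right; left
          have := ((my_prod_smul_le _ _ _ _).mp h).1
          rw [fstSub_prodProd] at this
          exact this
        · right; right
          exact ((my_prod_smul_eq_bot _ _ _).mp h).1
      · right; right
        push_neg at h1 h2
        constructor
        · refine ⟨h1, s.1, hsS.1, ?_⟩
          intro r K hr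
          have hside : ((r, (1 : R2)) * ((1 : R1), (0 : R2))) • (N1.prodProd N2) ≤ Submodule.prodProd K ⊥ := by
            rw [my_prod_smul_le, fstSub_prodProd, sndSub_prodProd]
            refine ⟨by simpa using hr, ?_⟩
            rw [my_smul_le]
            intro n hn
            simp
          rcases hs (r, 1) ((1 : R1), (0 : R2)) (Submodule.prodProd K ⊥) hside with h | h | h
          · exfalso
            have := ((my_prod_smul_le _ _ _ _).mp h).2
            rw [sndSub_prodProd] at this
            refine h2 s.2 hsS.2 (Submodule.mem_annihilator.mpr fun n hn => ?_)
            have := (my_smul_le _ _ _).mp this n hn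
            rw [Submodule.mem_bot] at this
            simpa using this
          · right
            have := ((my_prod_smul_le _ _ _ _).mp h).1
            rw [fstSub_prodProd] at this
            simpa using this
          · left
            have := ((my_prod_smul_eq_bot _ _ _).mp h).1
            rwa [show (s * ((r, (1 : R2)) * ((1 : R1), (0 : R2)))).1 = r * s.1 from by
              show s.1 * (r * 1) = r * s.1; ring] at this
        · refine ⟨h2, s.2, hsS.2, ?_⟩
          intro r K hr
          have hside : (((1 : R1), r) * ((0 : R1), (1 : R2))) • (N1.prodProd N2) ≤ Submodule.prodProd ⊥ K := by
            rw [my_prod_smul_le, fstSub_prodProd, sndSub_prodProd]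
            refine ⟨?_, by simpa using hr⟩
            rw [my_smul_le]
            intro n hn
            simp
          rcases hs (1, r) ((0 : R1), (1 : R2)) (Submodule.prodProd ⊥ K) hside with h | h | h
          · exfalso
            have := ((my_prod_smul_le _ _ _ _).mp h).1
            rw [fstSub_prodProd] at this
            refine h1 s.1 hsS.1 (Submodule.mem_annihilator.mpr fun n hn => ?_)
            have := (my_smul_le _ _ _).mp this n hn
            rw [Submodule.mem_bot] at this
            simpa using this
          · right
            have := ((my_prod_smul_le _ _ _ _).mp h).2
            rw [sndSub_prodProd] at this
            simpa using this
          · left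
            have := ((my_prod_smul_eq_bot _ _ _).mp h).2
            rwa [show (s * (((1 : R1), r) * ((0 : R1), (1 : R2)))).2 = r * s.2 from by
              show s.2 * (r * 1) = r * s.2; ring] at this
  · rintro (⟨⟨t, htS, htA⟩, hN2ann, s2, hs2S, hs2⟩ |
      ⟨⟨t, htS, htA⟩, hN1ann, s1, hs1S, hs1⟩ |
      ⟨⟨hN1ann, s1, hs1S, hs1⟩, hN2ann, s2, hs2S, hs2⟩)
    · have htA' := Submodule.mem_annihilator.mp htA
      have kill : ∀ x : R1, ∀ K1 : Submodule R1 M1, (t * x) • N1 ≤ K1 := by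
        intro x K1
        rw [my_smul_le]
        intro n hn
        rw [mul_comm, mul_smul, htA' n hn, smul_zero]
        exact K1.zero_mem
      have killbot : ∀ x : R1, (t * x) • N1 = ⊥ := by
        intro x
        rw [my_smul_eq_bot]
        intro n hn
        rw [mul_comm, mul_smul, htA' n hn, smul_zero]
      refine ⟨?_, (t, s2), ⟨htS, hs2S⟩, ?_⟩
      · intro u hu hu'
        exact hN2ann u.2 hu.2 ((my_mem_ann_prod N1 N2 u).mp hu').2
      · intro a b K hab
        have hab2 := ((my_prod_smul_le _ _ _ _).mp hab).2
        rcases hs2 a.2 b.2 (sndSub K) hab2 with h | h | h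
        · left
          exact (my_prod_smul_le _ _ _ _).mpr ⟨kill a.1 _, h⟩
        · right; left
          exact (my_prod_smul_le _ _ _ _).mpr ⟨kill b.1 _, h⟩
        · right; right
          exact (my_prod_smul_eq_bot _ _ _).mpr ⟨killbot _, h⟩
    · have htA' := Submodule.mem_annihilator.mp htA
      have kill : ∀ x : R2, ∀ K2 : Submodule R2 M2, (t * x) • N2 ≤ K2 := by
        intro x K2
        rw [my_smul_le]
        intro n hn
        rw [mul_comm, mul_smul, htA' n hn, smul_zero]
        exact K2.zero_mem
      have killbot : ∀ x : R2, (t * x) • N2 = ⊥ := by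
        intro x
        rw [my_smul_eq_bot]
        intro n hn
        rw [mul_comm, mul_smul, htA' n hn, smul_zero]
      refine ⟨?_, (s1, t), ⟨hs1S, htS⟩, ?_⟩
      · intro u hu hu'
        exact hN1ann u.1 hu.1 ((my_mem_ann_prod N1 N2 u).mp hu').1
      · intro a b K hab
        have hab1 := ((my_prod_smul_le _ _ _ _).mp hab).1
        rcases hs1 a.1 b.1 (fstSub K) hab1 with h | h | h
        · left
          exact (my_prod_smul_le _ _ _ _).mpr ⟨h, kill a.2 _⟩
        · right; left
          exact (my_prod_smul_le _ _ _ _).mpr ⟨h, kill b.2 _⟩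
        · right; right
          exact (my_prod_smul_eq_bot _ _ _).mpr ⟨h, killbot _⟩
    · refine ⟨?_, (s1, s2), ⟨hs1S, hs2S⟩, ?_⟩
      · intro u hu hu'
        exact hN1ann u.1 hu.1 ((my_mem_ann_prod N1 N2 u).mp hu').1
      · intro a b K hab
        have hab1 := ((my_prod_smul_le _ _ _ _).mp hab).1
        have hab2 := ((my_prod_smul_le _ _ _ _).mp hab).2
        have h1a := my_key N1 (fstSub K) s1 a.1 b.1 hs1 hab1
        have h1b := my_key N1 (fstSub K) s1 b.1 a.1 hs1 (by rwa [mul_comm] at hab1)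
        have h2a := my_key N2 (sndSub K) s2 a.2 b.2 hs2 hab2
        have h2b := my_key N2 (sndSub K) s2 b.2 a.2 hs2 (by rwa [mul_comm] at hab2)
        rw [mul_comm b.1 a.1] at h1b
        rw [mul_comm b.2 a.2] at h2b
        have goalA : (s1 * a.1) • N1 ≤ fstSub K → (s2 * a.2) • N2 ≤ sndSub K →
            (((s1, s2) : R1 × R2) * a) • (N1.prodProd N2) ≤ K :=
          fun hA1 hA2 => (my_prod_smul_le _ _ _ _).mpr ⟨hA1, hA2⟩
        have goalB : (s1 * b.1) • N1 ≤ fstSub K → (s2 * b.2) • N2 ≤ sndSub K →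
            (((s1, s2) : R1 × R2) * b) • (N1.prodProd N2) ≤ K :=
          fun hB1 hB2 => (my_prod_smul_le _ _ _ _).mpr ⟨hB1, hB2⟩
        have goalC : (s1 * (a.1 * b.1)) • N1 = ⊥ → (s2 * (a.2 * b.2)) • N2 = ⊥ →
            (((s1, s2) : R1 × R2) * (a * b)) • (N1.prodProd N2) = ⊥ :=
          fun hC1 hC2 => (my_prod_smul_eq_bot _ _ _).mpr ⟨hC1, hC2⟩
        exact my_combine h1a h1b h2a h2b
          (fun x y => Or.inl (goalA x y))
          (fun x y => Or.inr (Or.inl (goalB x y)))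
          (fun x y => Or.inr (Or.inr (goalC x y)))
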